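/- For any logic ILX containing the schema M: (A ▷ B) → (A ∧ □C ▷ B ∧ □C), if Γ ≺_S Δ then Γ ≺_{S ∪ Δ^□} Δ, where Δ^□ = { □C : □C ∈ Δ }. -/

import Mathlib

inductive ILForm : Type
  | bot : ILForm
  | var : ℕ → ILForm
  | imp : ILForm → ILForm → ILForm
  | box : ILForm → ILForm
  | rhd : ILForm → ILForm → ILForm
  deriving DecidableEq

namespace ILForm

def neg (A : ILForm) : ILForm := A.imp ILForm.bot
def or (A B : ILForm) : ILForm := A.neg.imp B
def and (A B : ILForm) : ILForm := (A.imp B.neg).neg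
def dia (A : ILForm) : ILForm := A.neg.box.neg

end ILForm

/-- A Boolean valuation: respects `⊥` and `→`, arbitrary on variables, boxes and `▷`. -/
def IsBoolVal (v : ILForm → Bool) : Prop :=
  v ILForm.bot = false ∧ ∀ A B : ILForm, v (A.imp B) = (!(v A) || v B)

/-- Classical tautologies in the modal language. -/
def ILTaut (A : ILForm) : Prop := ∀ v, IsBoolVal v → v A = true

/-- Provability in the interpretability logic IL. -/
inductive ILProv : ILForm → Prop
  | taut {A : ILForm} : ILTaut A → ILProv A
  | K {A B : ILForm} : ILProv (((A.imp B).box).imp ((A.box).imp (B.box)))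
  | L {A : ILForm} : ILProv ((((A.box).imp A).box).imp (A.box))
  | J1 {A B : ILForm} : ILProv (((A.imp B).box).imp (A.rhd B))
  | J2 {A B C : ILForm} : ILProv (((A.rhd B).and (B.rhd C)).imp (A.rhd C))
  | J3 {A B C : ILForm} : ILProv (((A.rhd C).and (B.rhd C)).imp ((A.or B).rhd C))
  | J4 {A B : ILForm} : ILProv ((A.rhd B).imp ((A.dia).imp (B.dia)))
  | J5 {A : ILForm} : ILProv ((A.dia).rhd A)
  | mp {A B : ILForm} : ILProv (A.imp B) → ILProv A → ILProv B
  | nec {A : ILForm} : ILProv A → ILProv (A.box)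

/-- An extension of IL: contains all IL theorems, closed under modus ponens and necessitation. -/
structure ILExtension (P : ILForm → Prop) : Prop where
  il : ∀ {A}, ILProv A → P A
  mp : ∀ {A B}, P (A.imp B) → P A → P B
  nec : ∀ {A}, P A → P (A.box)

/-- Derivability from a set of assumptions in the logic `P`. -/
inductive Deriv (P : ILForm → Prop) (S : Set ILForm) : ILForm → Prop
  | thm {A : ILForm} : P A → Deriv P S A
  | mem {A : ILForm} : A ∈ S → Deriv P S A
  | mp {A B : ILForm} : Deriv P S (A.imp B) → Deriv P S A → Deriv P S B

def ILConsistent (P : ILForm → Prop) (S : Set ILForm) : Prop := ¬ Deriv P S ILForm.bot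

/-- Maximal consistent set w.r.t. the logic `P`. -/
def ILMCS (P : ILForm → Prop) (S : Set ILForm) : Prop :=
  ILConsistent P S ∧ ∀ T : Set ILForm, S ⊂ T → ¬ ILConsistent P T

/-- Finite disjunction; the empty disjunction is `⊥`. -/
def bigOr : List ILForm → ILForm
  | [] => ILForm.bot
  | A :: l => A.or (bigOr l)

/-- `Assuring Γ Δ S` ("Γ ≺_S Δ"): Δ is an S-assuring successor of Γ. -/
def Assuring (Γ Δ : Set ILForm) (S : Set ILForm) : Prop :=
  ∀ (A : ILForm) (L : List ILForm), (∀ B ∈ L, B ∈ S) →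
    (A.neg.rhd (bigOr (L.map ILForm.neg))) ∈ Γ → A ∈ Δ ∧ A.box ∈ Δ

/-- `Succ Γ Δ` ("Γ ≺ Δ"): whenever □A ∈ Γ, both A and □A are in Δ. -/
def Succ (Γ Δ : Set ILForm) : Prop :=
  ∀ A : ILForm, A.box ∈ Γ → A ∈ Δ ∧ A.box ∈ Δ


section Aux

lemma taut_notbot : ILTaut ILForm.bot.neg := by
  intro v hv; obtain ⟨h0, hi⟩ := hv; simp only [ILForm.or, ILForm.and, ILForm.neg, ILForm.dia, hi, h0]; rfl

lemma taut_botelim (A : ILForm) : ILTaut (ILForm.bot.imp A) := by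
  intro v hv; obtain ⟨h0, hi⟩ := hv; simp only [ILForm.or, ILForm.and, ILForm.neg, ILForm.dia, hi, h0]; rfl

lemma taut_syll (A B C : ILForm) :
    ILTaut ((A.imp B).imp ((B.imp C).imp (A.imp C))) := by
  intro v hv; obtain ⟨h0, hi⟩ := hv; simp only [ILForm.or, ILForm.and, ILForm.neg, ILForm.dia, hi, h0]
  cases v A <;> cases v B <;> cases v C <;> rfl

lemma taut_andintro (A B : ILForm) : ILTaut (A.imp (B.imp (A.and B))) := by
  intro v hv; obtain ⟨h0, hi⟩ := hv; simp only [ILForm.or, ILForm.and, ILForm.neg, ILForm.dia, hi, h0]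
  cases v A <;> cases v B <;> rfl

lemma taut_andelim1 (A B : ILForm) : ILTaut ((A.and B).imp A) := by
  intro v hv; obtain ⟨h0, hi⟩ := hv; simp only [ILForm.or, ILForm.and, ILForm.neg, ILForm.dia, hi, h0]
  cases v A <;> cases v B <;> rfl

lemma taut_andelim2 (A B : ILForm) : ILTaut ((A.and B).imp B) := by
  intro v hv; obtain ⟨h0, hi⟩ := hv; simp only [ILForm.or, ILForm.and, ILForm.neg, ILForm.dia, hi, h0]
  cases v A <;> cases v B <;> rfl

lemma taut_uncurry (X Y Z : ILForm) :
    ILTaut (((X.and Y).imp Z).imp (X.imp (Y.imp Z))) := by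
  intro v hv; obtain ⟨h0, hi⟩ := hv; simp only [ILForm.or, ILForm.and, ILForm.neg, ILForm.dia, hi, h0]
  cases v X <;> cases v Y <;> cases v Z <;> rfl

lemma taut_perm (X Y Z : ILForm) :
    ILTaut (((X.and Y).imp Z).imp (Y.imp (X.imp Z))) := by
  intro v hv; obtain ⟨h0, hi⟩ := hv; simp only [ILForm.or, ILForm.and, ILForm.neg, ILForm.dia, hi, h0]
  cases v X <;> cases v Y <;> cases v Z <;> rfl

lemma taut_T4 (W X Y Z : ILForm) :
    ILTaut ((X.imp (Y.or Z)).imp ((W.or X).imp ((W.or Y).or Z))) := by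
  intro v hv; obtain ⟨h0, hi⟩ := hv; simp only [ILForm.or, ILForm.and, ILForm.neg, ILForm.dia, hi, h0]
  cases v W <;> cases v X <;> cases v Y <;> cases v Z <;> rfl

lemma taut_T5 (R Y O C N : ILForm) :
    ILTaut ((R.imp (Y.or O.neg)).imp ((N.imp C).imp ((N.imp O).imp
      (((C.neg).or R).imp (Y.or N.neg))))) := by
  intro v hv; obtain ⟨h0, hi⟩ := hv; simp only [ILForm.or, ILForm.and, ILForm.neg, ILForm.dia, hi, h0]
  cases v R <;> cases v Y <;> cases v O <;> cases v C <;> cases v N <;> rfl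

lemma taut_t2 (X BB BX : ILForm) :
    ILTaut ((BB.imp BX).imp (X.imp (BB.imp (X.and BX)))) := by
  intro v hv; obtain ⟨h0, hi⟩ := hv; simp only [ILForm.or, ILForm.and, ILForm.neg, ILForm.dia, hi, h0]
  cases v X <;> cases v BB <;> cases v BX <;> rfl

lemma taut_conjE (B E : ILForm) : ILTaut (((B.or E.neg).and E).imp B) := by
  intro v hv; obtain ⟨h0, hi⟩ := hv; simp only [ILForm.or, ILForm.and, ILForm.neg, ILForm.dia, hi, h0]
  cases v B <;> cases v E <;> rfl

lemma taut_negimp (E A : ILForm) :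
    ILTaut (((E.imp A).neg).imp (A.neg.and E)) := by
  intro v hv; obtain ⟨h0, hi⟩ := hv; simp only [ILForm.or, ILForm.and, ILForm.neg, ILForm.dia, hi, h0]
  cases v E <;> cases v A <;> rfl

variable {P : ILForm → Prop}

lemma pt (hP : ILExtension P) {A : ILForm} (h : ILTaut A) : P A :=
  hP.il (ILProv.taut h)

lemma psyll (hP : ILExtension P) {A B C : ILForm} (h1 : P (A.imp B))
    (h2 : P (B.imp C)) : P (A.imp C) :=
  hP.mp (hP.mp (pt hP (taut_syll A B C)) h1) h2

lemma boxmono (hP : ILExtension P) {A B : ILForm} (h : P (A.imp B)) :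
    P (A.box.imp B.box) :=
  hP.mp (hP.il ILProv.K) (hP.nec h)

lemma four (hP : ILExtension P) (X : ILForm) : P (X.box.imp X.box.box) := by
  have t1 : P ((X.and X.box).box.imp X.box) :=
    boxmono hP (pt hP (taut_andelim1 X X.box))
  have t2 : P (X.imp ((X.and X.box).box.imp (X.and X.box))) :=
    hP.mp (pt hP (taut_t2 X (X.and X.box).box X.box)) t1
  have t3 : P (X.box.imp (((X.and X.box).box.imp (X.and X.box)).box)) :=
    boxmono hP t2
  have t4 : P ((((X.and X.box).box.imp (X.and X.box)).box).imp (X.and X.box).box) :=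
    hP.il ILProv.L
  have t5 : P ((X.and X.box).box.imp X.box.box) :=
    boxmono hP (pt hP (taut_andelim2 X X.box))
  exact psyll hP (psyll hP t3 t4) t5

lemma rhd_mono_r (hP : ILExtension P) {A B B' : ILForm} (h : P (B.imp B')) :
    P ((A.rhd B).imp (A.rhd B')) := by
  have h1 : P (B.rhd B') := hP.mp (hP.il ILProv.J1) (hP.nec h)
  have h2 : P (((A.rhd B).and (B.rhd B')).imp (A.rhd B')) := hP.il ILProv.J2
  exact hP.mp (hP.mp (pt hP (taut_perm _ _ _)) h2) h1

lemma rhd_mono_l (hP : ILExtension P) {A A' B : ILForm} (h : P (A'.imp A)) :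
    P ((A.rhd B).imp (A'.rhd B)) := by
  have h1 : P (A'.rhd A) := hP.mp (hP.il ILProv.J1) (hP.nec h)
  have h2 : P (((A'.rhd A).and (A.rhd B)).imp (A'.rhd B)) := hP.il ILProv.J2
  exact hP.mp (hP.mp (pt hP (taut_uncurry _ _ _)) h2) h1

lemma deriv_cut {S : Set ILForm} {A B : ILForm}
    (h : Deriv P (S ∪ {A}) B) (hA : Deriv P S A) : Deriv P S B := by
  induction h with
  | thm h => exact .thm h
  | mem h =>
    rcases h with h | h
    · exact .mem h
    · rcases h with rfl; exact hA
  | mp _ _ ih1 ih2 => exact .mp ih1 ih2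

lemma mcs_deriv {Γ : Set ILForm} {A : ILForm} (hΓ : ILMCS P Γ)
    (h : Deriv P Γ A) : A ∈ Γ := by
  by_contra hA
  have hsub : Γ ⊂ Γ ∪ {A} := by
    constructor
    · exact Set.subset_union_left
    · intro hs; exact hA (hs (Set.mem_union_right _ rfl))
  have hinc := hΓ.2 _ hsub
  have hbot : Deriv P (Γ ∪ {A}) ILForm.bot := by
    by_contra hb; exact hinc hb
  exact hΓ.1 (deriv_cut hbot h)

lemma mcs_thm {Γ : Set ILForm} {A : ILForm} (hΓ : ILMCS P Γ) (h : P A) :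
    A ∈ Γ := mcs_deriv hΓ (.thm h)

lemma mcs_mp {Γ : Set ILForm} {A B : ILForm} (hΓ : ILMCS P Γ)
    (h1 : A.imp B ∈ Γ) (h2 : A ∈ Γ) : B ∈ Γ :=
  mcs_deriv hΓ (.mp (.mem h1) (.mem h2))

/-- Finite conjunction; the empty conjunction is `¬⊥`. -/
def bigAnd : List ILForm → ILForm
  | [] => ILForm.bot.neg
  | A :: l => A.and (bigAnd l)

lemma bigAnd_box_mem (hP : ILExtension P) {Δ : Set ILForm} (hΔ : ILMCS P Δ) :
    ∀ Cs : List ILForm, (∀ C ∈ Cs, C.box ∈ Δ) → (bigAnd Cs).box ∈ Δ := by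
  intro Cs
  induction Cs with
  | nil => intro _; exact mcs_thm hΔ (hP.nec (pt hP taut_notbot))
  | cons C Cs ih =>
    intro hCs
    have h1 : (bigAnd Cs).box ∈ Δ := ih (fun C hC => hCs C (List.mem_cons_of_mem _ hC))
    have h2 : C.box ∈ Δ := hCs C List.mem_cons_self
    have h3 : P (C.box.imp (((bigAnd Cs).imp (C.and (bigAnd Cs))).box)) :=
      boxmono hP (pt hP (taut_andintro C (bigAnd Cs)))
    have h4 : P ((((bigAnd Cs).imp (C.and (bigAnd Cs))).box).imp
        ((bigAnd Cs).box.imp (C.and (bigAnd Cs)).box)) := hP.il ILProv.K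
    exact mcs_mp hΔ (mcs_mp hΔ (mcs_thm hΔ (psyll hP h3 h4)) h2) h1

lemma split_label (hP : ILExtension P) {S Δ : Set ILForm} :
    ∀ L : List ILForm,
      (∀ B ∈ L, B ∈ S ∪ {X | ∃ C : ILForm, X = C.box ∧ C.box ∈ Δ}) →
      ∃ L1 Cs : List ILForm, (∀ B ∈ L1, B ∈ S) ∧ (∀ C ∈ Cs, C.box ∈ Δ) ∧
        P ((bigOr (L.map ILForm.neg)).imp
          ((bigOr (L1.map ILForm.neg)).or ((bigAnd Cs).box.neg))) := by
  intro L
  induction L with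
  | nil =>
    intro _
    exact ⟨[], [], by simp, by simp, pt hP (taut_botelim _)⟩
  | cons B L ih =>
    intro hL
    obtain ⟨L1, Cs, hL1, hCs, prf⟩ := ih (fun B hB => hL B (List.mem_cons_of_mem _ hB))
    rcases hL B List.mem_cons_self with hBS | ⟨C, rfl, hCΔ⟩
    · refine ⟨B :: L1, Cs, ?_, hCs, ?_⟩
      · intro X hX; rcases List.mem_cons.mp hX with rfl | hX
        · exact hBS
        · exact hL1 X hX
      · exact hP.mp (pt hP (taut_T4 B.neg (bigOr (L.map ILForm.neg))
          (bigOr (L1.map ILForm.neg)) ((bigAnd Cs).box.neg))) prf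
    · refine ⟨L1, C :: Cs, hL1, ?_, ?_⟩
      · intro X hX; rcases List.mem_cons.mp hX with rfl | hX
        · exact hCΔ
        · exact hCs X hX
      · have p2 : P ((bigAnd (C :: Cs)).box.imp C.box) :=
          boxmono hP (pt hP (taut_andelim1 C (bigAnd Cs)))
        have p3 : P ((bigAnd (C :: Cs)).box.imp (bigAnd Cs).box) :=
          boxmono hP (pt hP (taut_andelim2 C (bigAnd Cs)))
        exact hP.mp (hP.mp (hP.mp (pt hP (taut_T5 (bigOr (L.map ILForm.neg))
          (bigOr (L1.map ILForm.neg)) (bigAnd Cs).box C.box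
          (bigAnd (C :: Cs)).box)) prf) p2) p3

end Aux

/-- For logics containing M: (A▷B)→(A∧□C ▷ B∧□C), we may add Δ's boxes to the label. -/
theorem labelling_lemma_M (P : ILForm → Prop) (hP : ILExtension P)
    (hprM : ∀ A B C : ILForm,
      P ((A.rhd B).imp ((A.and C.box).rhd (B.and C.box))))
    (Γ Δ : Set ILForm) (hΓ : ILMCS P Γ) (hΔ : ILMCS P Δ)
    (S : Set ILForm) (h : Assuring Γ Δ S) :
    Assuring Γ Δ (S ∪ {X | ∃ C : ILForm, X = C.box ∧ C.box ∈ Δ}) := by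
  intro A L hL hmem
  obtain ⟨L1, Cs, hL1, hCs, prf⟩ := split_label hP L hL
  set B1 := bigOr (L1.map ILForm.neg) with hB1
  set E := (bigAnd Cs).box with hE
  have m1 : (A.neg.rhd (B1.or E.neg)) ∈ Γ :=
    mcs_mp hΓ (mcs_thm hΓ (rhd_mono_r hP prf)) hmem
  have m2 : ((A.neg.and E).rhd ((B1.or E.neg).and E)) ∈ Γ :=
    mcs_mp hΓ (mcs_thm hΓ (hprM A.neg (B1.or E.neg) (bigAnd Cs))) m1
  have m3 : ((A.neg.and E).rhd B1) ∈ Γ :=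
    mcs_mp hΓ (mcs_thm hΓ (rhd_mono_r hP (pt hP (taut_conjE B1 E)))) m2
  have m4 : (((E.imp A).neg).rhd B1) ∈ Γ :=
    mcs_mp hΓ (mcs_thm hΓ (rhd_mono_l hP (pt hP (taut_negimp E A)))) m3
  obtain ⟨hA', hbA'⟩ := h (E.imp A) L1 hL1 m4
  have hEΔ : E ∈ Δ := bigAnd_box_mem hP hΔ Cs hCs
  have hAΔ : A ∈ Δ := mcs_mp hΔ hA' hEΔ
  have hbE : E.box ∈ Δ := mcs_mp hΔ (mcs_thm hΔ (four hP (bigAnd Cs))) hEΔ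
  have hbA : A.box ∈ Δ :=
    mcs_mp hΔ (mcs_mp hΔ (mcs_thm hΔ (hP.il ILProv.K)) hbA') hbE
  exact ⟨hAΔ, hbA⟩
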